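/- For the torus-bundle metric over a product of almost Hodge manifolds, where dθⱼ = 2π Σₖ (a_{jk}/c_k) ω*ₖ with ωₖ the Kähler forms lifted to P, the horizontal tensors satisfy T̃ᵢ X = π Σⱼ b_{ij} Σₖ (a_{jk}/c_k) J*ₖ X, where J*ₖ is the lift of the almost complex structure Jₖ. -/

import Mathlib

open scoped BigOperators

/-- An abstract model of the differential-geometric data on a manifold:
`F` plays the role of the ring of smooth functions (an `ℝ`-algebra),
`V` the `F`-module of vector fields, `D` the derivation action of vector
fields on functions, `bracket` the Lie bracket, `g` a Riemannian metric and
`conn` its Levi-Civita connection. -/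
structure RiemSetup (F V : Type) [CommRing F] [Algebra ℝ F]
    [AddCommGroup V] [Module F V] where
  D : V → F → F
  bracket : V → V → V
  g : V → V → F
  conn : V → V → V
  D_add : ∀ (X : V) (f₁ f₂ : F), D X (f₁ + f₂) = D X f₁ + D X f₂
  D_mul : ∀ (X : V) (f₁ f₂ : F), D X (f₁ * f₂) = D X f₁ * f₂ + f₁ * D X f₂
  D_const : ∀ (X : V) (r : ℝ), D X (algebraMap ℝ F r) = 0
  D_add_vec : ∀ (X Y : V) (f : F), D (X + Y) f = D X f + D Y f
  D_smul_vec : ∀ (f : F) (X : V) (f' : F), D (f • X) f' = f * D X f'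
  g_symm : ∀ X Y, g X Y = g Y X
  g_add_left : ∀ X Y Z, g (X + Y) Z = g X Z + g Y Z
  g_smul_left : ∀ (f : F) (X Y : V), g (f • X) Y = f * g X Y
  g_nondeg : ∀ Z, (∀ X, g X Z = 0) → Z = 0
  conn_add_left : ∀ X Y Z, conn (X + Y) Z = conn X Z + conn Y Z
  conn_smul_left : ∀ (f : F) (X Y : V), conn (f • X) Y = f • conn X Y
  conn_add_right : ∀ X Y Z, conn X (Y + Z) = conn X Y + conn X Z
  conn_leibniz : ∀ (X : V) (f : F) (Y : V), conn X (f • Y) = f • conn X Y + D X f • Y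
  compat : ∀ X Y Z, D X (g Y Z) = g (conn X Y) Z + g Y (conn X Z)
  torsion_free : ∀ X Y, conn X Y - conn Y X = bracket X Y

namespace RiemSetup

variable {F V : Type} [CommRing F] [Algebra ℝ F] [AddCommGroup V] [Module F V]

/-- The covariant derivative `(∇_X K)(Y,Z)` of a `(0,2)`-tensor `K`. -/
def nabla2 (S : RiemSetup F V) (K : V → V → F) (X Y Z : V) : F :=
  S.D X (K Y Z) - K (S.conn X Y) Z - K Y (S.conn X Z)

/-- The cyclic sum `𝒞_{X,Y,Z} (∇_X K)(Y,Z)`. -/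
def cyc (S : RiemSetup F V) (K : V → V → F) (X Y Z : V) : F :=
  S.nabla2 K X Y Z + S.nabla2 K Y Z X + S.nabla2 K Z X Y

/-- `K` is a conformal Killing tensor with associated 1-form `P`:
`(∇_X K)(X,X) = P(X) g(X,X)` for all `X`. -/
def IsConformalKillingWith (S : RiemSetup F V) (K : V → V → F) (P : V → F) : Prop :=
  ∀ X, S.nabla2 K X X X = P X * S.g X X

/-- A Killing tensor: vanishing cyclic sum of the covariant derivative. -/
def IsKillingTensor (S : RiemSetup F V) (K : V → V → F) : Prop :=
  ∀ X Y Z, S.cyc K X Y Z = 0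

/-- A Killing vector field: `L_ξ g = 0`. -/
def IsKillingField (S : RiemSetup F V) (ξ : V) : Prop :=
  ∀ X Y, S.D ξ (S.g X Y) = S.g (S.bracket ξ X) Y + S.g X (S.bracket ξ Y)

/-- Exterior differential of a 1-form. -/
def d1 (S : RiemSetup F V) (θ : V → F) (X Y : V) : F :=
  S.D X (θ Y) - S.D Y (θ X) - θ (S.bracket X Y)

/-- Lie derivative of a 1-form along a vector field. -/
def lie1 (S : RiemSetup F V) (ξ : V) (θ : V → F) (X : V) : F :=
  S.D ξ (θ X) - θ (S.bracket ξ X)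

/-- Covariant derivative `(∇_X φ)(Y)` of an `m`-form (given as an `m`-multilinear
alternating function of vector fields). -/
def nablaForm (S : RiemSetup F V) {m : ℕ} (φ : (Fin m → V) → F) (X : V)
    (Y : Fin m → V) : F :=
  S.D X (φ Y) - ∑ i, φ (Function.update Y i (S.conn X (Y i)))

/-- Interior product `X ⌟ φ`. -/
def inter {m : ℕ} (X : V) (φ : (Fin (m + 1) → V) → F) (Y : Fin m → V) : F :=
  φ (Fin.cons X Y)

/-- Wedge product `X♭ ∧ ψ` of the metric dual of `X` with an `m`-form `ψ`. -/
def wedge1 (S : RiemSetup F V) {m : ℕ} (X : V) (ψ : (Fin m → V) → F)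
    (Y : Fin (m + 1) → V) : F :=
  ∑ i : Fin (m + 1), (-1 : F) ^ (i : ℕ) * S.g X (Y i) * ψ (fun j => Y (i.succAbove j))

/-- Pointwise inner product of two `m`-forms, computed in an orthonormal frame `E`. -/
noncomputable def ipF {n m : ℕ} (E : Fin n → V) (φ ψ : (Fin m → V) → F) : F :=
  ((Nat.factorial m : ℝ)⁻¹) • ∑ f : Fin m → Fin n, φ (E ∘ f) * ψ (E ∘ f)

/-- Covariant derivative of a 2-form (as a bilinear function of vector fields). -/
def nabla2f (S : RiemSetup F V) (β : V → V → F) (X Y Z : V) : F :=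
  S.D X (β Y Z) - β (S.conn X Y) Z - β Y (S.conn X Z)

/-- Codifferential of a 2-form with respect to a frame `E`. -/
def codiff2 (S : RiemSetup F V) {m : ℕ} (E : Fin m → V) (β : V → V → F) (X : V) : F :=
  -∑ a, S.nabla2f β (E a) (E a) X

/-- Riemann curvature tensor `R(X,Y)Z`. -/
def curv (S : RiemSetup F V) (X Y Z : V) : V :=
  S.conn X (S.conn Y Z) - S.conn Y (S.conn X Z) - S.conn (S.bracket X Y) Z

/-- Ricci tensor, computed in an orthonormal frame `E`. -/
def ricci (S : RiemSetup F V) {N : ℕ} (E : Fin N → V) (X Y : V) : F :=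
  ∑ a, S.g (S.curv (E a) X Y) (E a)

end RiemSetup

open RiemSetup

namespace RiemSetupAux

variable {F V : Type} [CommRing F] [Algebra ℝ F] [AddCommGroup V] [Module F V]
variable (S : RiemSetup F V)

lemma D_zero (X : V) : S.D X 0 = 0 := by
  have h := S.D_add X 0 0
  rw [add_zero] at h
  have h2 : S.D X 0 + S.D X 0 = S.D X 0 + 0 := by rw [add_zero]; exact h.symm
  exact (add_left_cancel h2)

lemma D_sum {ι : Type*} (X : V) (s : Finset ι) (f : ι → F) :
    S.D X (∑ j ∈ s, f j) = ∑ j ∈ s, S.D X (f j) := by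
  classical
  induction s using Finset.induction with
  | empty => simp [D_zero]
  | insert _ _ h ih => rw [Finset.sum_insert h, Finset.sum_insert h, S.D_add, ih]

lemma g_zero_left (Y : V) : S.g 0 Y = 0 := by
  have : S.g ((0 : F) • (0 : V)) Y = (0 : F) * S.g 0 Y := S.g_smul_left 0 0 Y
  simpa using this

lemma g_sum_left {ι : Type*} (s : Finset ι) (X : ι → V) (Y : V) :
    S.g (∑ j ∈ s, X j) Y = ∑ j ∈ s, S.g (X j) Y := by
  classical
  induction s using Finset.induction with
  | empty => simp [g_zero_left]
  | insert _ _ h ih => rw [Finset.sum_insert h, Finset.sum_insert h, S.g_add_left, ih]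

lemma g_neg_left (X Y : V) : S.g (-X) Y = -S.g X Y := by
  have : S.g ((-1 : F) • X) Y = (-1 : F) * S.g X Y := S.g_smul_left (-1) X Y
  simpa [neg_one_smul] using this

lemma g_sub_left (X X' Y : V) : S.g (X - X') Y = S.g X Y - S.g X' Y := by
  rw [sub_eq_add_neg, S.g_add_left, g_neg_left, sub_eq_add_neg]

lemma g_add_right (X Y Z : V) : S.g X (Y + Z) = S.g X Y + S.g X Z := by
  rw [S.g_symm, S.g_add_left, S.g_symm Y X, S.g_symm Z X]

lemma g_sub_right (X Y Z : V) : S.g X (Y - Z) = S.g X Y - S.g X Z := by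
  rw [S.g_symm, g_sub_left, S.g_symm Y X, S.g_symm Z X]

/-- Antisymmetry of `(X,Y) ↦ g(∇_X ξ, Y)` for a Killing field. -/
lemma killing_antisym (ξ : V) (hk : S.IsKillingField ξ) (X Y : V) :
    S.g (S.conn X ξ) Y + S.g X (S.conn Y ξ) = 0 := by
  have h1 := S.compat ξ X Y
  have h2 := hk X Y
  have eX : S.conn ξ X = S.bracket ξ X + S.conn X ξ :=
    sub_eq_iff_eq_add.mp (S.torsion_free ξ X)
  have eY : S.conn ξ Y = S.bracket ξ Y + S.conn Y ξ :=
    sub_eq_iff_eq_add.mp (S.torsion_free ξ Y)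
  rw [eX, eY, S.g_add_left, g_add_right] at h1
  linear_combination h2 - h1

/-- For a Killing field, `d(ξ♭)(X,Y) = 2 g(∇_X ξ, Y)`. -/
lemma d1_flat (ξ : V) (hk : S.IsKillingField ξ) (X Y : V) :
    S.d1 (fun E => S.g ξ E) X Y = 2 * S.g (S.conn X ξ) Y := by
  unfold RiemSetup.d1
  have c1 := S.compat X ξ Y
  have c2 := S.compat Y ξ X
  have hb : S.g ξ (S.bracket X Y) = S.g ξ (S.conn X Y) - S.g ξ (S.conn Y X) := by
    rw [← (S.torsion_free X Y), g_sub_right]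
  have hs : S.g (S.conn Y ξ) X = S.g X (S.conn Y ξ) := S.g_symm _ _
  have ha := killing_antisym S ξ hk X Y
  linear_combination c1 - c2 - hb - hs - ha

/-- `d` of a constant-coefficient combination of 1-forms. -/
lemma d1_comb (m : ℕ) (cst : Fin m → ℝ) (θ : Fin m → V → F) (X Y : V) :
    S.d1 (fun E => ∑ j, algebraMap ℝ F (cst j) * θ j E) X Y
      = ∑ j, algebraMap ℝ F (cst j) * S.d1 (θ j) X Y := by
  unfold RiemSetup.d1
  rw [D_sum, D_sum, ← Finset.sum_sub_distrib, ← Finset.sum_sub_distrib]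
  refine Finset.sum_congr rfl fun j _ => ?_
  rw [S.D_mul, S.D_mul]
  have hcst : ∀ Z : V, S.D Z (algebraMap ℝ F (cst j)) = 0 := fun Z => S.D_const Z _
  rw [hcst, hcst]
  ring

end RiemSetupAux

open RiemSetupAux

/-- for the torus bundle over a product of almost Hodge manifolds,
with `dθⱼ = 2π Σₖ (a_{jk}/cₖ) ω*ₖ`, the horizontal tensors are
`T̃ᵢ X = π Σⱼ b_{ij} Σₖ (a_{jk}/cₖ) J*ₖ X`. -/
theorem T_formula_over_hodge_product {F V : Type} [CommRing F] [Algebra ℝ F]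
    [AddCommGroup V] [Module F V]
    (r n : ℕ) (S : RiemSetup F V) (θ : Fin r → V → F) (ξ : Fin r → V)
    (b binv : Fin r → Fin r → ℝ)
    (a : Fin r → Fin n → ℤ) (c : Fin n → ℝ) (hc : ∀ k, c k ≠ 0)
    (Jl : Fin n → V → V)  -- the lifted almost complex structures J*ₖ
    (hb₁ : ∀ i j, (∑ k, b i k * binv k j) = if i = j then 1 else 0)
    (hb₂ : ∀ i j, (∑ k, binv i k * b k j) = if i = j then 1 else 0)
    (hgξ : ∀ i E, S.g (ξ i) E = ∑ j, algebraMap ℝ F (b i j) * θ j E)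
    (hkill : ∀ i, S.IsKillingField (ξ i))
    -- dθⱼ = 2π Σₖ (a_{jk}/cₖ) ω*ₖ, with ω*ₖ(X,Y) = g(J*ₖX, Y)
    (hdθ : ∀ j X Y, S.d1 (θ j) X Y
      = algebraMap ℝ F (2 * Real.pi) *
          ∑ k, algebraMap ℝ F ((a j k : ℝ) / c k) * S.g (Jl k X) Y)
    -- the J*ₖ take horizontal values, and TᵢX = ∇_X ξⁱ is horizontal
    (hJhor : ∀ k X i, θ i (Jl k X) = 0)
    (hThor : ∀ i X, (∀ j, θ j X = 0) → ∀ j, θ j (S.conn X (ξ i)) = 0) :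
    ∀ i X, (∀ j, θ j X = 0) →
      S.conn X (ξ i) = algebraMap ℝ F Real.pi •
        ∑ j, ∑ k, algebraMap ℝ F (b i j * ((a j k : ℝ) / c k)) • Jl k X := by
  intro i X _hX
  set A : ℝ →+* F := algebraMap ℝ F with hA
  -- Step 1: 2 g(∇_X ξⁱ, Y) = ∑_j b_{ij} dθ_j(X,Y)
  have key : ∀ Y, S.g (S.conn X (ξ i)) Y
      = A Real.pi * ∑ j, ∑ k, A (b i j * ((a j k : ℝ) / c k)) * S.g (Jl k X) Y := by
    intro Y
    have hfun : (fun E => S.g (ξ i) E)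
        = fun E => ∑ j, A (b i j) * θ j E := funext fun E => hgξ i E
    have h2 : 2 * S.g (S.conn X (ξ i)) Y
        = ∑ j, A (b i j) * S.d1 (θ j) X Y := by
      rw [← d1_flat S (ξ i) (hkill i) X Y, hfun, d1_comb]
    have h3 : 2 * S.g (S.conn X (ξ i)) Y
        = 2 * (A Real.pi * ∑ j, ∑ k, A (b i j * ((a j k : ℝ) / c k)) * S.g (Jl k X) Y) := by
      rw [h2]
      simp only [hdθ, Finset.mul_sum]
      refine Finset.sum_congr rfl fun j _ => ?_
      refine Finset.sum_congr rfl fun k _ => ?_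
      have h2A : (2 : F) = A (2 : ℝ) := (map_ofNat A 2).symm
      have hsc : A (b i j) * A (2 * Real.pi) * A ((a j k : ℝ) / c k)
          = (2 : F) * (A Real.pi * A (b i j * ((a j k : ℝ) / c k))) := by
        rw [h2A, ← map_mul, ← map_mul, ← map_mul, ← map_mul]
        congr 1
        ring
      linear_combination hsc * S.g (Jl k X) Y
    have h2u : IsUnit (2 : F) := by
      refine IsUnit.of_mul_eq_one (a := (2 : F)) (A (1/2 : ℝ)) ?_
      have h2A : (2 : F) = A (2 : ℝ) := (map_ofNat A 2).symm
      rw [h2A, ← map_mul]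
      norm_num
    exact h2u.mul_left_cancel h3
  -- Step 2: conclude by nondegeneracy
  set W : V := A Real.pi • ∑ j, ∑ k, A (b i j * ((a j k : ℝ) / c k)) • Jl k X with hW
  have hgW : ∀ Y, S.g W Y
      = A Real.pi * ∑ j, ∑ k, A (b i j * ((a j k : ℝ) / c k)) * S.g (Jl k X) Y := by
    intro Y
    rw [hW, S.g_smul_left, g_sum_left S]
    congr 1
    refine Finset.sum_congr rfl fun j _ => ?_
    rw [g_sum_left S]
    exact Finset.sum_congr rfl fun k _ => S.g_smul_left _ _ _
  have hzero : ∀ Y, S.g Y (S.conn X (ξ i) - W) = 0 := by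
    intro Y
    rw [S.g_symm, g_sub_left, key Y, hgW Y, sub_self]
  have := S.g_nondeg _ hzero
  exact sub_eq_zero.mp this
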